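/- Let m ≥ 1, let Ω ⊆ ℝ^m be an open set, and let B ⊆ ℝ^m be the origin-centered ball with the same Gaussian volume as Ω, i.e. γ_m(B) = γ_m(Ω). If h : [0, ∞) → [0, ∞) is nonincreasing, then ∫_Ω h(|x|) dγ_m(x) ≤ ∫_B h(|x|) dγ_m(x). -/

import Mathlib

open MeasureTheory Real Set Complex

noncomputable section

/-- The `m`-dimensional Gaussian measure `dγ_m = (2π)^{-m/2} e^{-|x|²/2} dx`. -/
def gaussianMeasure (m : ℕ) : Measure (EuclideanSpace ℝ (Fin m)) :=
  volume.withDensity fun x =>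
    ENNReal.ofReal ((2 * π) ^ (-(m : ℝ) / 2) * Real.exp (-‖x‖ ^ 2 / 2))

lemma gaussian_density_integrable (m : ℕ) :
    Integrable (fun x : EuclideanSpace ℝ (Fin m) =>
      (2 * π) ^ (-(m : ℝ) / 2) * Real.exp (-‖x‖ ^ 2 / 2)) := by
  have h1 : Integrable (fun x : EuclideanSpace ℝ (Fin m) =>
      cexp (-(1/2 : ℂ) * ‖x‖ ^ 2 + 0 * (inner ℝ (0 : EuclideanSpace ℝ (Fin m)) x : ℝ))) :=
    GaussianFourier.integrable_cexp_neg_mul_sq_norm_add (by norm_num) 0 0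
  have h2 := h1.norm
  apply Integrable.const_mul
  convert h2 using 2 with x
  rw [Complex.norm_exp]
  simp [Complex.add_re, Complex.mul_re]
  norm_cast
  ring

instance gaussianMeasure_finite (m : ℕ) : IsFiniteMeasure (gaussianMeasure m) := by
  constructor
  rw [gaussianMeasure, withDensity_apply _ MeasurableSet.univ, Measure.restrict_univ]
  have hnn : 0 ≤ᵐ[volume] fun x : EuclideanSpace ℝ (Fin m) =>
      (2 * π) ^ (-(m : ℝ) / 2) * Real.exp (-‖x‖ ^ 2 / 2) := by
    filter_upwards with x
    positivity
  rw [← ofReal_integral_eq_lintegral_ofReal (gaussian_density_integrable m) hnn]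
  exact ENNReal.ofReal_lt_top

/-- **Lemma 3.1.** Let `Ω ⊆ ℝ^m` be an open set and `B` the origin-centered
ball with the same Gaussian volume as `Ω`. If `h : [0,∞) → [0,∞)` is
nonincreasing, then `∫_Ω h(|x|) dγ_m ≤ ∫_B h(|x|) dγ_m`. -/
theorem gaussian_symmetrization_antitone
    (m : ℕ) (hm : 1 ≤ m)
    (Ω : Set (EuclideanSpace ℝ (Fin m))) (hΩ : IsOpen Ω)
    (R : ℝ) (hR : 0 ≤ R)
    (hvol : gaussianMeasure m (Metric.ball (0 : EuclideanSpace ℝ (Fin m)) R)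
      = gaussianMeasure m Ω)
    (h : ℝ → ℝ)
    (hnonneg : ∀ r, 0 ≤ r → 0 ≤ h r)
    (hanti : AntitoneOn h (Ici (0 : ℝ))) :
    ∫ x in Ω, h ‖x‖ ∂gaussianMeasure m ≤
      ∫ x in Metric.ball (0 : EuclideanSpace ℝ (Fin m)) R, h ‖x‖ ∂gaussianMeasure m := by
  set μ := gaussianMeasure m
  set B := Metric.ball (0 : EuclideanSpace ℝ (Fin m)) R with hB
  -- replace h by a globally antitone function g
  set g : ℝ → ℝ := fun r => h (max r 0) with hg
  have hganti : Antitone g := by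
    intro a b hab
    exact hanti (le_max_right a 0) (le_max_right b 0) (max_le_max hab le_rfl)
  have hgnn : ∀ r, 0 ≤ g r := fun r => hnonneg _ (le_max_right r 0)
  have hgh : ∀ x : EuclideanSpace ℝ (Fin m), h ‖x‖ = g ‖x‖ := by
    intro x; simp [hg, max_eq_left (norm_nonneg x)]
  simp only [hgh]
  -- measurability and integrability
  have hmeas : Measurable fun x : EuclideanSpace ℝ (Fin m) => g ‖x‖ :=
    hganti.measurable.comp measurable_norm
  have hint : Integrable (fun x : EuclideanSpace ℝ (Fin m) => g ‖x‖) μ := by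
    refine Integrable.mono' (integrable_const (g 0)) hmeas.aestronglyMeasurable ?_
    filter_upwards with x
    rw [Real.norm_eq_abs, _root_.abs_of_nonneg (hgnn _)]
    exact hganti (norm_nonneg x)
  have hΩm : MeasurableSet Ω := hΩ.measurableSet
  have hBm : MeasurableSet B := Metric.isOpen_ball.measurableSet
  -- measure of the symmetric differences are equal
  have hμfin : ∀ s : Set (EuclideanSpace ℝ (Fin m)), μ s ≠ ⊤ :=
    fun s => (measure_lt_top μ s).ne
  have hdiff : μ (Ω \ B) = μ (B \ Ω) := by
    have h1 : μ (Ω \ B) = μ Ω - μ (Ω ∩ B) := by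
      rw [show Ω \ B = Ω \ (Ω ∩ B) from (diff_self_inter).symm,
        measure_diff inter_subset_left ((hΩm.inter hBm).nullMeasurableSet) (hμfin _)]
    have h2 : μ (B \ Ω) = μ B - μ (Ω ∩ B) := by
      rw [show B \ Ω = B \ (Ω ∩ B) by rw [inter_comm]; exact (diff_self_inter).symm,
        measure_diff inter_subset_right ((hΩm.inter hBm).nullMeasurableSet) (hμfin _)]
    rw [h1, h2, hvol]
  -- split the integrals
  rw [← integral_inter_add_diff hBm hint.integrableOn (s := Ω),
    ← integral_inter_add_diff hΩm hint.integrableOn (s := B), inter_comm B Ω]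
  gcongr ?_ + ?_
  · exact le_rfl
  calc ∫ x in Ω \ B, g ‖x‖ ∂μ ≤ ∫ _x in Ω \ B, g R ∂μ := by
        refine setIntegral_mono_on hint.integrableOn (integrableOn_const ?_)
          (hΩm.diff hBm) ?_
        · exact (measure_lt_top μ _).ne
        · intro x hx
          have : R ≤ ‖x‖ := by
            have := hx.2
            simpa [hB, Metric.mem_ball, dist_zero_right] using this
          exact hganti this
    _ = (μ (Ω \ B)).toReal • g R := setIntegral_const _
    _ = (μ (B \ Ω)).toReal • g R := by rw [hdiff]
    _ = ∫ _x in B \ Ω, g R ∂μ := (setIntegral_const _).symm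
    _ ≤ ∫ x in B \ Ω, g ‖x‖ ∂μ := by
        refine setIntegral_mono_on (integrableOn_const (measure_lt_top μ _).ne)
          hint.integrableOn (hBm.diff hΩm) ?_
        intro x hx
        have : ‖x‖ ≤ R := by
          have := hx.1
          rw [hB, Metric.mem_ball, dist_zero_right] at this
          exact this.le
        exact hganti this
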